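/- The map sending an n×n matrix over a field F in reduced reverse column echelon form to its column space is a bijection onto the set of all linear subspaces of Fⁿ. -/
import Mathlib


open Matrix

namespace SchubertCell

/-- The strict down-set of a subset of a poset. -/
def Down {X : Type*} [Preorder X] (Y : Set X) : Set X := {x | ∃ y ∈ Y, x < y}

variable {F : Type*} [Field F] {n : ℕ}

/-- The pivot-set of a matrix: the maximal elements of the support
under the componentwise (product) order on indices. -/
def Piv (M : Matrix (Fin n) (Fin n) F) : Set (Fin n × Fin n) :=
  {p | M p.1 p.2 ≠ 0 ∧ ∀ q : Fin n × Fin n, p < q → M q.1 q.2 = 0}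

/-- Upper triangular matrix. -/
def UpperTri (G : Matrix (Fin n) (Fin n) F) : Prop := ∀ i j : Fin n, j < i → G i j = 0

/-- `M i j` is the last (largest row index) nonzero entry of column `j`. -/
def IsLast (M : Matrix (Fin n) (Fin n) F) (i j : Fin n) : Prop :=
  M i j ≠ 0 ∧ ∀ i' : Fin n, i < i' → M i' j = 0

/-- Reduced reverse column echelon form: (CE1), (CE2), (CE3). -/
def IsRRCEF (M : Matrix (Fin n) (Fin n) F) : Prop :=
  (∀ j j' : Fin n, j ≤ j' → (∃ i, M i j' ≠ 0) → ∃ i, M i j ≠ 0) ∧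
  (∀ i j i' j' : Fin n, IsLast M i j → IsLast M i' j' → j < j' → i' < i) ∧
  (∀ i j : Fin n, IsLast M i j → M i j = 1 ∧ ∀ j' : Fin n, j' ≠ j → M i j' = 0)

/-- `D(α)`: elements of the strict down-set of `α` whose row contains no element of `α`. -/
def DSet (α : Set (Fin n × Fin n)) : Set (Fin n × Fin n) :=
  {p | p ∈ Down α ∧ ∀ k : Fin n, (p.1, k) ∉ α}

/-! ### Auxiliary theory: leading indices and normalized vectors -/

/-- `i` is the largest index where `v` is nonzero. -/
def IsLead (v : Fin n → F) (i : Fin n) : Prop :=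
  v i ≠ 0 ∧ ∀ j : Fin n, i < j → v j = 0

theorem isLead_unique {v : Fin n → F} {i i' : Fin n} (h : IsLead v i) (h' : IsLead v i') :
    i = i' := by
  rcases lt_trichotomy i i' with hh | hh | hh
  · exact absurd (h.2 i' hh) h'.1
  · exact hh
  · exact absurd (h'.2 i hh) h.1

theorem isLast_iff_isLead {M : Matrix (Fin n) (Fin n) F} {i j : Fin n} :
    IsLast M i j ↔ IsLead (fun r => M r j) i := Iff.rfl

theorem isLast_unique {M : Matrix (Fin n) (Fin n) F} {i i' j : Fin n}
    (h : IsLast M i j) (h' : IsLast M i' j) : i = i' :=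
  isLead_unique (isLast_iff_isLead.1 h) (isLast_iff_isLead.1 h')

theorem exists_isLead {v : Fin n → F} (hv : v ≠ 0) : ∃ i, IsLead v i := by
  classical
  set s : Finset (Fin n) := Finset.univ.filter (fun i => v i ≠ 0) with hs
  have hne : s.Nonempty := by
    by_contra h
    apply hv
    funext i
    by_contra hvi
    exact h ⟨i, Finset.mem_filter.2 ⟨Finset.mem_univ _, hvi⟩⟩
  refine ⟨s.max' hne, ?_, ?_⟩
  · exact (Finset.mem_filter.1 (s.max'_mem hne)).2
  · intro j hj
    by_contra hvj
    exact absurd (s.le_max' j (Finset.mem_filter.2 ⟨Finset.mem_univ _, hvj⟩)) (not_le.2 hj)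

/-- The set of leading indices of a subspace. -/
def LeadSet (W : Submodule F (Fin n → F)) : Set (Fin n) := {i | ∃ v ∈ W, IsLead v i}

/-- A normalized vector of `W` with leading index `i`. -/
def Nml (W : Submodule F (Fin n → F)) (i : Fin n) (v : Fin n → F) : Prop :=
  v ∈ W ∧ v i = 1 ∧ (∀ j : Fin n, i < j → v j = 0) ∧
    ∀ k ∈ LeadSet W, k ≠ i → v k = 0

theorem eq_zero_of_vanish {W : Submodule F (Fin n → F)} {v : Fin n → F}
    (hvW : v ∈ W) (h : ∀ k ∈ LeadSet W, v k = 0) : v = 0 := by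
  by_contra hv
  obtain ⟨i, hi⟩ := exists_isLead hv
  exact hi.1 (h i ⟨v, hvW, hi⟩)

theorem nml_unique {W : Submodule F (Fin n → F)} {i : Fin n} {v v' : Fin n → F}
    (h : Nml W i v) (h' : Nml W i v') : v = v' := by
  have hd : v - v' = 0 := by
    apply eq_zero_of_vanish (W.sub_mem h.1 h'.1)
    intro k hk
    by_cases hki : k = i
    · subst hki; simp [h.2.1, h'.2.1]
    · simp [h.2.2.2 k hk hki, h'.2.2.2 k hk hki]
  exact sub_eq_zero.1 hd

theorem exists_nml (W : Submodule F (Fin n → F)) : ∀ i ∈ LeadSet W, ∃ v, Nml W i v := by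
  classical
  suffices H : ∀ t : ℕ, ∀ i : Fin n, i.val < t → i ∈ LeadSet W → ∃ v, Nml W i v by
    intro i hi; exact H (i.val + 1) i (Nat.lt_succ_self _) hi
  intro t
  induction t with
  | zero => intro i hi; exact absurd hi (Nat.not_lt_zero _)
  | succ t ih =>
    intro i hi hiL
    obtain ⟨v₀, hv₀W, hv₀⟩ := hiL
    have hex : ∀ k : Fin n, ∃ u : Fin n → F, (k ∈ LeadSet W ∧ k < i) → Nml W k u := by
      intro k
      by_cases h : k ∈ LeadSet W ∧ k < i
      · obtain ⟨u, hu⟩ := ih k (by have := h.2; omega) h.1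
        exact ⟨u, fun _ => hu⟩
      · exact ⟨0, fun h' => absurd h' h⟩
    choose u hu using hex
    set s : Finset (Fin n) := Finset.univ.filter (fun k => k ∈ LeadSet W ∧ k < i) with hs
    have hmem : ∀ k ∈ s, k ∈ LeadSet W ∧ k < i := fun k hk => (Finset.mem_filter.1 hk).2
    set v₁ : Fin n → F := (v₀ i)⁻¹ • v₀ with hv₁
    set v : Fin n → F := v₁ - ∑ k ∈ s, v₁ k • u k with hv
    have hvW : v ∈ W := by
      apply W.sub_mem (W.smul_mem _ hv₀W)
      exact Submodule.sum_mem _ fun k hk => W.smul_mem _ (hu k (hmem k hk)).1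
    have happ : ∀ m : Fin n, v m = v₁ m - ∑ k ∈ s, v₁ k * u k m := by
      intro m
      simp [hv, Finset.sum_apply]
    have hv₁app : ∀ m, v₁ m = (v₀ i)⁻¹ * v₀ m := fun m => rfl
    have htop : ∀ j : Fin n, i < j → v j = 0 := by
      intro j hj
      rw [happ, hv₁app, hv₀.2 j hj, mul_zero, Finset.sum_eq_zero, sub_zero]
      intro k hk
      rw [(hu k (hmem k hk)).2.2.1 j (lt_trans (hmem k hk).2 hj), mul_zero]
    refine ⟨v, hvW, ?_, htop, ?_⟩
    · rw [happ, hv₁app, inv_mul_cancel₀ hv₀.1, Finset.sum_eq_zero, sub_zero]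
      intro k hk
      rw [(hu k (hmem k hk)).2.2.1 i (hmem k hk).2, mul_zero]
    · intro m hmL hmi
      rcases lt_or_gt_of_ne hmi with hlt | hgt
      · have hms : m ∈ s := Finset.mem_filter.2 ⟨Finset.mem_univ _, hmL, hlt⟩
        rw [happ, Finset.sum_eq_single m]
        · rw [(hu m ⟨hmL, hlt⟩).2.1, mul_one, sub_self]
        · intro k hk hkm
          rw [(hu k (hmem k hk)).2.2.2 m hmL (Ne.symm hkm), mul_zero]
        · intro hms'; exact absurd hms hms'
      · exact htop m hgt

theorem span_nml_ge (W : Submodule F (Fin n → F)) (u : Fin n → (Fin n → F))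
    (hu : ∀ i ∈ LeadSet W, Nml W i (u i)) :
    W ≤ Submodule.span F (u '' LeadSet W) := by
  have H : ∀ t : ℕ, ∀ w ∈ W, (∀ j : Fin n, t ≤ j.val → w j = 0) →
      w ∈ Submodule.span F (u '' LeadSet W) := by
    intro t
    induction t with
    | zero =>
      intro w _ hw
      have hw0 : w = 0 := funext fun j => hw j (Nat.zero_le _)
      simp [hw0]
    | succ t ih =>
      intro w hwW hw
      by_cases hn : t < n
      · set i : Fin n := ⟨t, hn⟩ with hidef
        by_cases hwi : w i = 0
        · apply ih w hwW
          intro j hj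
          rcases eq_or_lt_of_le hj with hj' | hj'
          · have hji : j = i := Fin.ext hj'.symm
            rw [hji]; exact hwi
          · exact hw j hj'
        · have hlead : IsLead w i := ⟨hwi, fun j hj => hw j hj⟩
          have hiL : i ∈ LeadSet W := ⟨w, hwW, hlead⟩
          obtain ⟨huW, hui, hutop, _⟩ := hu i hiL
          set w' : Fin n → F := w - w i • u i with hw'def
          have hw'W : w' ∈ W := W.sub_mem hwW (W.smul_mem _ huW)
          have hw'v : ∀ j : Fin n, t ≤ j.val → w' j = 0 := by
            intro j hj
            rcases eq_or_lt_of_le hj with hj' | hj'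
            · have hji : j = i := Fin.ext hj'.symm
              simp [hw'def, hji, hui]
            · simp [hw'def, hw j hj', hutop j hj']
          have hmem := ih w' hw'W hw'v
          have hu_mem : u i ∈ Submodule.span F (u '' LeadSet W) :=
            Submodule.subset_span ⟨i, hiL, rfl⟩
          have hsplit : w = w' + w i • u i := by simp [hw'def]
          rw [hsplit]
          exact Submodule.add_mem _ hmem (Submodule.smul_mem _ _ hu_mem)
      · apply ih w hwW
        intro j hj
        have := j.isLt
        omega
  intro w hw
  exact H n w hw (fun j hj => absurd j.isLt (by omega))

open Classical in
/-- A choice of normalized vector for each leading index. -/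
noncomputable def nmlVec (W : Submodule F (Fin n → F)) (i : Fin n) : Fin n → F :=
  if h : i ∈ LeadSet W then (exists_nml W i h).choose else 0

theorem nml_nmlVec {W : Submodule F (Fin n → F)} {i : Fin n} (h : i ∈ LeadSet W) :
    Nml W i (nmlVec W i) := by
  rw [nmlVec, dif_pos h]
  exact (exists_nml W i h).choose_spec

/-- The (finite) set of leading indices as a `Finset`. -/
noncomputable def LeadFinset (W : Submodule F (Fin n → F)) : Finset (Fin n) :=
  (Set.toFinite (LeadSet W)).toFinset

theorem mem_leadFinset {W : Submodule F (Fin n → F)} {i : Fin n} :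
    i ∈ LeadFinset W ↔ i ∈ LeadSet W := Set.Finite.mem_toFinset _

theorem leadFinset_card_le (W : Submodule F (Fin n → F)) : (LeadFinset W).card ≤ n := by
  simpa using Finset.card_le_univ (LeadFinset W)

/-- The pivot row of the `j`-th column of the canonical matrix: the `j`-th largest
leading index. -/
noncomputable def pvt (W : Submodule F (Fin n → F)) (j : ℕ)
    (h : j < (LeadFinset W).card) : Fin n :=
  (LeadFinset W).orderEmbOfFin rfl ⟨(LeadFinset W).card - 1 - j, by omega⟩

theorem pvt_mem {W : Submodule F (Fin n → F)} {j : ℕ} (h : j < (LeadFinset W).card) :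
    pvt W j h ∈ LeadSet W :=
  mem_leadFinset.1 (Finset.orderEmbOfFin_mem _ rfl _)

theorem pvt_anti {W : Submodule F (Fin n → F)} {j j' : ℕ} (hj : j < (LeadFinset W).card)
    (hj' : j' < (LeadFinset W).card) (hlt : j < j') : pvt W j' hj' < pvt W j hj := by
  apply ((LeadFinset W).orderEmbOfFin rfl).strictMono
  exact Fin.mk_lt_mk.2 (by omega)

theorem pvt_ne {W : Submodule F (Fin n → F)} {j j' : ℕ} (hj : j < (LeadFinset W).card)
    (hj' : j' < (LeadFinset W).card) (hne : j ≠ j') : pvt W j hj ≠ pvt W j' hj' := by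
  rcases Nat.lt_or_ge j j' with h | h
  · exact (pvt_anti hj hj' h).ne'
  · exact (pvt_anti hj' hj (by omega)).ne

theorem pvt_surj {W : Submodule F (Fin n → F)} {i : Fin n} (hi : i ∈ LeadSet W) :
    ∃ (j : ℕ) (h : j < (LeadFinset W).card), pvt W j h = i := by
  have hmem : i ∈ LeadFinset W := mem_leadFinset.2 hi
  have : i ∈ Set.range ((LeadFinset W).orderEmbOfFin rfl) := by
    rw [Finset.range_orderEmbOfFin]
    exact_mod_cast hmem
  obtain ⟨m, hm⟩ := this
  refine ⟨(LeadFinset W).card - 1 - m.val, by have := m.isLt; omega, ?_⟩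
  rw [pvt, ← hm]
  congr 1
  apply Fin.ext
  have := m.isLt
  simp only []
  omega

/-- The canonical reduced reverse column echelon matrix with column space `W`. -/
noncomputable def canon (W : Submodule F (Fin n → F)) : Matrix (Fin n) (Fin n) F :=
  fun i j => if h : j.val < (LeadFinset W).card then nmlVec W (pvt W j.val h) i else 0

theorem canon_apply_pos {W : Submodule F (Fin n → F)} {j : Fin n}
    (h : j.val < (LeadFinset W).card) (i : Fin n) :
    canon W i j = nmlVec W (pvt W j.val h) i := dif_pos h

theorem canon_apply_neg {W : Submodule F (Fin n → F)} {j : Fin n}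
    (h : ¬ j.val < (LeadFinset W).card) (i : Fin n) :
    canon W i j = 0 := dif_neg h

theorem isLast_canon {W : Submodule F (Fin n → F)} {j : Fin n}
    (h : j.val < (LeadFinset W).card) :
    IsLast (canon W) (pvt W j.val h) j := by
  have hnml := nml_nmlVec (pvt_mem h)
  constructor
  · rw [canon_apply_pos h, hnml.2.1]; exact one_ne_zero
  · intro i' hi'
    rw [canon_apply_pos h]
    exact hnml.2.2.1 i' hi'

theorem isLast_canon_unique {W : Submodule F (Fin n → F)} {i j : Fin n}
    (hl : IsLast (canon W) i j) :
    ∃ h : j.val < (LeadFinset W).card, i = pvt W j.val h := by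
  by_cases h : j.val < (LeadFinset W).card
  · exact ⟨h, isLast_unique hl (isLast_canon h)⟩
  · exact absurd (canon_apply_neg h i) hl.1

theorem canon_rrcef (W : Submodule F (Fin n → F)) : IsRRCEF (canon W) := by
  refine ⟨?_, ?_, ?_⟩
  · intro j j' hle hne
    have hj' : j'.val < (LeadFinset W).card := by
      by_contra h
      obtain ⟨i, hi⟩ := hne
      exact hi (canon_apply_neg h i)
    have hj : j.val < (LeadFinset W).card := lt_of_le_of_lt (by exact_mod_cast hle) hj'
    exact ⟨pvt W j.val hj, (isLast_canon hj).1⟩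
  · intro i j i' j' hl hl' hjj'
    obtain ⟨h, rfl⟩ := isLast_canon_unique hl
    obtain ⟨h', rfl⟩ := isLast_canon_unique hl'
    exact pvt_anti h h' hjj'
  · intro i j hl
    obtain ⟨h, rfl⟩ := isLast_canon_unique hl
    constructor
    · rw [canon_apply_pos h]
      exact (nml_nmlVec (pvt_mem h)).2.1
    · intro j' hne
      by_cases h' : j'.val < (LeadFinset W).card
      · rw [canon_apply_pos h']
        apply (nml_nmlVec (pvt_mem h')).2.2.2 _ (pvt_mem h)
        exact pvt_ne h h' (fun hv => hne (Fin.ext (by omega)))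
      · exact canon_apply_neg h' _

theorem span_canon (W : Submodule F (Fin n → F)) :
    Submodule.span F (Set.range fun j : Fin n => fun i : Fin n => canon W i j) = W := by
  apply le_antisymm
  · rw [Submodule.span_le]
    rintro _ ⟨j, rfl⟩
    by_cases h : j.val < (LeadFinset W).card
    · have hcol : (fun i => canon W i j) = nmlVec W (pvt W j.val h) :=
        funext fun i => canon_apply_pos h i
      show (fun i => canon W i j) ∈ W
      rw [hcol]
      exact (nml_nmlVec (pvt_mem h)).1
    · have hcol : (fun i => canon W i j) = 0 := funext fun i => canon_apply_neg h i
      show (fun i => canon W i j) ∈ W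
      rw [hcol]
      exact W.zero_mem
  · refine le_trans (span_nml_ge W (nmlVec W) (fun i hi => nml_nmlVec hi)) ?_
    apply Submodule.span_le.2
    rintro _ ⟨i, hiL, rfl⟩
    obtain ⟨j, hj, hpj⟩ := pvt_surj hiL
    apply Submodule.subset_span
    refine ⟨⟨j, lt_of_lt_of_le hj (leadFinset_card_le W)⟩, ?_⟩
    show (fun i' => canon W i' ⟨j, lt_of_lt_of_le hj (leadFinset_card_le W)⟩) = nmlVec W i
    funext i'
    show canon W i' ⟨j, lt_of_lt_of_le hj (leadFinset_card_le W)⟩ = nmlVec W i i'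
    rw [canon_apply_pos (j := ⟨j, lt_of_lt_of_le hj (leadFinset_card_le W)⟩) hj, hpj]

theorem eq_canon {M : Matrix (Fin n) (Fin n) F} (hM : IsRRCEF M) :
    M = canon (Submodule.span F (Set.range fun j : Fin n => fun i : Fin n => M i j)) := by
  classical
  obtain ⟨hCE1, hCE2, hCE3⟩ := hM
  set W := Submodule.span F (Set.range fun j : Fin n => fun i : Fin n => M i j) with hWdef
  have hcol : ∀ j : Fin n, (fun i => M i j) ∈ W := fun j => Submodule.subset_span ⟨j, rfl⟩
  have hpiv : ∀ j : Fin n, (∃ i, M i j ≠ 0) → ∃ i, IsLast M i j := by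
    rintro j ⟨i0, hi0⟩
    have hne : (fun i => M i j) ≠ 0 := fun h => hi0 (congrFun h i0)
    exact exists_isLead hne
  have hpivLead : ∀ i j : Fin n, IsLast M i j → i ∈ LeadSet W :=
    fun i j h => ⟨_, hcol j, isLast_iff_isLead.1 h⟩
  have hLeadPiv : ∀ i ∈ LeadSet W, ∃ j, IsLast M i j := by
    rintro i ⟨v, hvW, hvi⟩
    rw [hWdef, Submodule.mem_span_range_iff_exists_fun] at hvW
    obtain ⟨c, hc⟩ := hvW
    set T : Finset (Fin n) := Finset.univ.filter (fun j => c j ≠ 0 ∧ ∃ i', M i' j ≠ 0) with hT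
    have hvT : ∀ m : Fin n, v m = ∑ j ∈ T, c j * M m j := by
      intro m
      have hvapp : v m = ∑ j, c j * M m j := by
        rw [← hc]; simp [Finset.sum_apply]
      rw [hvapp]
      symm
      apply Finset.sum_subset (Finset.subset_univ T)
      intro j _ hjT
      rw [hT] at hjT
      simp only [Finset.mem_filter, Finset.mem_univ, true_and, not_and_or, not_not,
        not_exists, not_not] at hjT
      rcases hjT with h0 | h0
      · rw [h0, zero_mul]
      · rw [h0 m, mul_zero]
    have hTne : T.Nonempty := by
      by_contra h
      rw [Finset.not_nonempty_iff_eq_empty] at h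
      have h0 := hvT i
      rw [h, Finset.sum_empty] at h0
      exact hvi.1 h0
    set j₀ := T.min' hTne with hj₀
    have hj₀T : j₀ ∈ T := T.min'_mem hTne
    obtain ⟨hcj₀, hNZ⟩ := (Finset.mem_filter.1 hj₀T).2
    obtain ⟨i₀, hlast₀⟩ := hpiv j₀ hNZ
    have hother : ∀ j ∈ T, j ≠ j₀ → ∀ r : Fin n, i₀ ≤ r → M r j = 0 := by
      intro j hjT hne r hr
      have hj₀j : j₀ < j := lt_of_le_of_ne (T.min'_le j hjT) (Ne.symm hne)
      obtain ⟨ij, hlastj⟩ := hpiv j (Finset.mem_filter.1 hjT).2.2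
      have hlt : ij < i₀ := hCE2 i₀ j₀ ij j hlast₀ hlastj hj₀j
      exact hlastj.2 r (lt_of_lt_of_le hlt hr)
    have hlead : IsLead v i₀ := by
      constructor
      · rw [hvT, Finset.sum_eq_single j₀]
        · exact mul_ne_zero hcj₀ hlast₀.1
        · intro j hj hne; rw [hother j hj hne i₀ le_rfl, mul_zero]
        · intro h; exact absurd hj₀T h
      · intro r hr
        rw [hvT, Finset.sum_eq_zero]
        intro j hj
        by_cases hne : j = j₀
        · rw [hne, hlast₀.2 r hr, mul_zero]
        · rw [hother j hj hne r (le_of_lt hr), mul_zero]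
    have heq := isLead_unique hvi hlead
    exact ⟨j₀, heq ▸ hlast₀⟩
  have hcolNml : ∀ i j : Fin n, IsLast M i j → (fun r => M r j) = nmlVec W i := by
    intro i j hlast
    have hiL : i ∈ LeadSet W := hpivLead i j hlast
    apply nml_unique _ (nml_nmlVec hiL)
    refine ⟨hcol j, (hCE3 i j hlast).1, fun r hr => hlast.2 r hr, ?_⟩
    intro k hkL hki
    obtain ⟨j', hlast'⟩ := hLeadPiv k hkL
    have hjj' : j' ≠ j := by
      rintro rfl
      exact hki (isLast_unique hlast' hlast)
    exact (hCE3 k j' hlast').2 j (Ne.symm hjj')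
  set D : Finset (Fin n) := Finset.univ.filter (fun j => ∃ i, M i j ≠ 0) with hD
  have hmemD : ∀ j : Fin n, j ∈ D ↔ ∃ i, M i j ≠ 0 := by
    intro j; rw [hD]; simp
  have hDcard : D.card = (LeadFinset W).card := by
    apply Finset.card_bij (fun j hj => Classical.choose (hpiv j ((hmemD j).1 hj)))
    · intro j hj
      exact mem_leadFinset.2
        (hpivLead _ _ (Classical.choose_spec (hpiv j ((hmemD j).1 hj))))
    · intro a ha b hb heq
      by_contra hne
      have hlasta := Classical.choose_spec (hpiv a ((hmemD a).1 ha))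
      have hlastb := Classical.choose_spec (hpiv b ((hmemD b).1 hb))
      rcases lt_or_gt_of_ne hne with h | h
      · have := hCE2 _ a _ b hlasta hlastb h
        rw [heq] at this
        exact lt_irrefl _ this
      · have := hCE2 _ b _ a hlastb hlasta h
        rw [heq] at this
        exact lt_irrefl _ this
    · intro i hi
      obtain ⟨j, hlast⟩ := hLeadPiv i (mem_leadFinset.1 hi)
      have hjD : j ∈ D := (hmemD j).2 ⟨i, hlast.1⟩
      exact ⟨j, hjD, isLast_unique (Classical.choose_spec (hpiv j ((hmemD j).1 hjD))) hlast⟩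
  have hDdown : ∀ j j' : Fin n, j ≤ j' → j' ∈ D → j ∈ D := by
    intro j j' hle hj'
    exact (hmemD j).2 (hCE1 j j' hle ((hmemD j').1 hj'))
  have hDiff : ∀ j : Fin n, j ∈ D ↔ j.val < (LeadFinset W).card := by
    intro j
    rw [← hDcard]
    constructor
    · intro hj
      by_contra h
      have hsub : Finset.Iic j ⊆ D := fun x hx => hDdown x j (Finset.mem_Iic.1 hx) hj
      have hcard := Finset.card_le_card hsub
      rw [Fin.card_Iic] at hcard
      omega
    · intro hj
      by_contra h
      have hsub : D ⊆ Finset.Iio j := by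
        intro x hx
        rw [Finset.mem_Iio]
        by_contra hxj
        exact h (hDdown j x (le_of_not_gt hxj) hx)
      have hcard := Finset.card_le_card hsub
      rw [Fin.card_Iio] at hcard
      omega
  have hrn : (LeadFinset W).card ≤ n := leadFinset_card_le W
  have hcolpiv : ∀ m : Fin (LeadFinset W).card,
      ∃ i, IsLast M i ⟨m.val, lt_of_lt_of_le m.isLt hrn⟩ := by
    intro m
    apply hpiv
    exact (hmemD _).1 ((hDiff ⟨m.val, lt_of_lt_of_le m.isLt hrn⟩).2 m.isLt)
  choose f hf using hcolpiv
  have hfs : StrictMono (f ∘ Fin.rev) := by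
    intro a b hab
    apply hCE2 _ _ _ _ (hf (Fin.rev b)) (hf (Fin.rev a))
    rw [Fin.mk_lt_mk]
    have ha := a.isLt
    have hb := b.isLt
    simp only [Fin.val_rev]
    omega
  have hfmem : ∀ m, (f ∘ Fin.rev) m ∈ LeadFinset W :=
    fun m => mem_leadFinset.2 (hpivLead _ _ (hf (Fin.rev m)))
  have hfeq := Finset.orderEmbOfFin_unique (rfl : (LeadFinset W).card = (LeadFinset W).card)
    hfmem hfs
  have hfpvt : ∀ (m : Fin (LeadFinset W).card), f m = pvt W m.val m.isLt := by
    intro m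
    have h1 : f m = (f ∘ Fin.rev) (Fin.rev m) := by rw [Function.comp_apply, Fin.rev_rev]
    rw [h1, hfeq]
    rw [pvt]
    congr 1
    apply Fin.ext
    have := m.isLt
    simp only [Fin.val_rev]
    omega
  funext i j
  by_cases h : j.val < (LeadFinset W).card
  · set m : Fin (LeadFinset W).card := ⟨j.val, h⟩ with hm
    have hcol_j : (⟨m.val, lt_of_lt_of_le m.isLt hrn⟩ : Fin n) = j := Fin.ext rfl
    have hlast := hf m
    rw [hcol_j] at hlast
    have hceq := hcolNml (f m) j hlast
    rw [canon_apply_pos h]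
    have : pvt W j.val h = f m := by rw [hfpvt m]
    rw [this, ← hceq]
  · have hjD : j ∉ D := fun hc => h ((hDiff j).1 hc)
    have hzero : ∀ i', M i' j = 0 := by
      by_contra hc
      push_neg at hc
      exact hjD ((hmemD j).2 hc)
    rw [hzero i, canon_apply_neg h]

theorem rrcef_columnSpace_bijective (F : Type*) [Field F] (n : ℕ) :
    Function.Bijective
      (fun M : {M : Matrix (Fin n) (Fin n) F // IsRRCEF M} =>
        Submodule.span F (Set.range fun j : Fin n => fun i : Fin n => M.val i j)) := by
  constructor
  · intro M M' h
    apply Subtype.ext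
    have h1 := eq_canon M.2
    have h2 := eq_canon M'.2
    simp only at h
    rw [h1, h2, h]
  · intro W
    exact ⟨⟨canon W, canon_rrcef W⟩, span_canon W⟩

end SchubertCell
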